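/- For every c ∈ ℝ, E[L(Z + c)] = (k₁ + k₂) ∫_{|c|}^∞ z f(z) dz + c (k₁ − k₂)/2 + |c| (k₁ + k₂) ∫₀^{|c|} f(z) dz. -/

import Mathlib

open MeasureTheory ProbabilityTheory
open Set


lemma els_key (f : ℝ → ℝ) (hf_meas : Measurable f) (hf_nonneg : ∀ x, 0 ≤ f x)
    (hf_total : ∫ z, f z = 1) (hf_symm : ∀ x, f (-x) = f x)
    (hint_zf : Integrable (fun z => z * f z))
    (k₁ k₂ a : ℝ) (ha : 0 ≤ a) :
    ∫ z, (if 0 ≤ z + a then k₁ * (z + a) else -k₂ * (z + a)) * f z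
      = (k₁ + k₂) * (∫ z in Set.Ioi a, z * f z) + a * (k₁ - k₂) / 2
        + a * (k₁ + k₂) * (∫ z in (0:ℝ)..a, f z) := by
  have hint_f : Integrable f := by
    by_contra h
    rw [integral_undef h] at hf_total
    norm_num at hf_total
  -- ∫ z f = 0
  have hzf0 : ∫ z, z * f z = 0 := by
    have h1 : ∫ z, (-z) * f (-z) = ∫ z, z * f z :=
      integral_neg_eq_self (fun z => z * f z) volume
    have h2 : ∫ z, (-z) * f (-z) = - ∫ z, z * f z := by
      rw [← integral_neg]
      congr 1
      funext z
      rw [hf_symm]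
      ring
    linarith [h1, h2]
  set I := ∫ z in Set.Ioi a, z * f z with hI
  set J := ∫ z in (0:ℝ)..a, f z with hJ
  have F1 : ∫ z in Iio (-a), z * f z = -I := by
    have h := integral_comp_neg_Ioi a (fun z => z * f z)
    simp only [hf_symm] at h
    have h' : ∫ x in Ioi a, -x * f x = - I := by
      rw [hI, ← integral_neg]
      congr 1
      funext x
      ring
    have h'' : ∫ z in Iio (-a), z * f z = ∫ z in Iic (-a), z * f z :=
      (integral_Iic_eq_integral_Iio).symm
    linarith [h, h', h'']
  have F2 : ∫ z in Ici (-a), z * f z = I := by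
    have h := integral_add_compl (measurableSet_Ici (a := -a)) hint_zf
    rw [compl_Ici, hzf0, F1] at h
    linarith
  have hIoi0 : ∫ z in Ioi (0:ℝ), f z = 1/2 := by
    have h := integral_add_compl (measurableSet_Iic (a := (0:ℝ))) hint_f
    rw [compl_Iic, hf_total] at h
    have h2 : ∫ z in Iic (0:ℝ), f z = ∫ z in Ioi (0:ℝ), f z := by
      have := integral_comp_neg_Iic (0:ℝ) f
      simp only [hf_symm, neg_zero] at this
      exact this
    linarith
  have hsplit : ∫ z in Ioi (0:ℝ), f z = J + ∫ z in Ioi a, f z := by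
    rw [hJ, intervalIntegral.integral_of_le ha]
    rw [← setIntegral_union (Ioc_disjoint_Ioi le_rfl) measurableSet_Ioi
      hint_f.integrableOn hint_f.integrableOn, Ioc_union_Ioi_eq_Ioi ha]
  have F3 : ∫ z in Iio (-a), f z = 1/2 - J := by
    have h : ∫ z in Iic (-a), f z = ∫ z in Ioi a, f z := by
      have := integral_comp_neg_Iic (-a) f
      simp only [hf_symm, neg_neg] at this
      exact this
    rw [← integral_Iic_eq_integral_Iio, h]
    linarith
  have F4 : ∫ z in Ici (-a), f z = 1/2 + J := by
    have h := integral_add_compl (measurableSet_Ici (a := -a)) hint_f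
    rw [compl_Ici, hf_total, F3] at h
    linarith
  -- integrability of the integrand
  have hmeasg : Measurable fun z => (if 0 ≤ z + a then k₁ * (z + a) else -k₂ * (z + a)) * f z := by
    apply Measurable.mul _ hf_meas
    exact Measurable.ite (measurableSet_le measurable_const (by measurability))
      (by measurability) (by measurability)
  have hintg : Integrable fun z => (if 0 ≤ z + a then k₁ * (z + a) else -k₂ * (z + a)) * f z := by
    apply Integrable.mono ((hint_zf.abs.add (hint_f.const_mul a)).const_mul (abs k₁ + abs k₂))
      hmeasg.aestronglyMeasurable
    filter_upwards with z
    have hfz := hf_nonneg z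
    have h1 : |z * f z| = |z| * f z := by rw [abs_mul, abs_of_nonneg hfz]
    rw [Real.norm_eq_abs, Real.norm_eq_abs, abs_mul]
    have hzabs : |z + a| ≤ |z| + a := by
      calc |z + a| ≤ |z| + |a| := abs_add_le _ _
      _ = |z| + a := by rw [abs_of_nonneg ha]
    have hk : abs k₁ + abs k₂ ≥ 0 := by positivity
    split_ifs with h
    · rw [abs_mul, abs_of_nonneg hfz]
      have : |k₁| * (|z + a| * f z) ≤ (abs k₁ + abs k₂) * ((|z| + a) * f z) := by
        apply mul_le_mul (by simp [abs_nonneg]) _ (by positivity) hk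
        exact mul_le_mul_of_nonneg_right hzabs hfz
      calc |k₁| * |z + a| * f z = |k₁| * (|z + a| * f z) := by ring
      _ ≤ (abs k₁ + abs k₂) * ((|z| + a) * f z) := this
      _ ≤ |(abs k₁ + abs k₂) * (|z * f z| + a * f z)| := by
          have hnn : 0 ≤ (abs k₁ + abs k₂) * (|z * f z| + a * f z) :=
            mul_nonneg hk (add_nonneg (abs_nonneg _) (mul_nonneg ha hfz))
          rw [abs_of_nonneg hnn, h1]
          apply le_of_eq
          ring
    · rw [abs_mul, abs_of_nonneg hfz, abs_neg]
      have : |k₂| * (|z + a| * f z) ≤ (abs k₁ + abs k₂) * ((|z| + a) * f z) := by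
        apply mul_le_mul (by simp [abs_nonneg]) _ (by positivity) hk
        exact mul_le_mul_of_nonneg_right hzabs hfz
      calc |k₂| * |z + a| * f z = |k₂| * (|z + a| * f z) := by ring
      _ ≤ (abs k₁ + abs k₂) * ((|z| + a) * f z) := this
      _ ≤ |(abs k₁ + abs k₂) * (|z * f z| + a * f z)| := by
          have hnn : 0 ≤ (abs k₁ + abs k₂) * (|z * f z| + a * f z) :=
            mul_nonneg hk (add_nonneg (abs_nonneg _) (mul_nonneg ha hfz))
          rw [abs_of_nonneg hnn, h1]
          apply le_of_eq
          ring
  have hsplit2 := integral_add_compl (measurableSet_Ici (a := -a)) hintg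
  rw [compl_Ici] at hsplit2
  have E1 : ∫ z in Ici (-a), (if 0 ≤ z + a then k₁ * (z + a) else -k₂ * (z + a)) * f z
      = k₁ * (I + a * (1/2 + J)) := by
    have : ∀ z ∈ Ici (-a), (if 0 ≤ z + a then k₁ * (z + a) else -k₂ * (z + a)) * f z
        = k₁ * (z * f z) + (k₁ * a) * f z := by
      intro z hz
      rw [if_pos (by simpa using neg_le_iff_add_nonneg.mp hz)]
      ring
    rw [setIntegral_congr_fun measurableSet_Ici this,
      integral_add ((hint_zf.integrableOn.const_mul k₁)) (hint_f.integrableOn.const_mul (k₁ * a)),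
      integral_const_mul, integral_const_mul, F2, F4]
    ring
  have E2 : ∫ z in Iio (-a), (if 0 ≤ z + a then k₁ * (z + a) else -k₂ * (z + a)) * f z
      = -k₂ * (-I + a * (1/2 - J)) := by
    have : ∀ z ∈ Iio (-a), (if 0 ≤ z + a then k₁ * (z + a) else -k₂ * (z + a)) * f z
        = (-k₂) * (z * f z) + ((-k₂) * a) * f z := by
      intro z hz
      rw [if_neg (by simp only [mem_Iio] at hz; linarith)]
      ring
    rw [setIntegral_congr_fun measurableSet_Iio this,
      integral_add ((hint_zf.integrableOn.const_mul (-k₂))) (hint_f.integrableOn.const_mul (-k₂ * a)),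
      integral_const_mul, integral_const_mul, F1, F3]
    ring
  rw [← hsplit2, E1, E2]
  ring


/-- `E[L(Z + c)] = (k₁+k₂) ∫_{|c|}^∞ z f(z) dz + c(k₁−k₂)/2
    + |c|(k₁+k₂) ∫₀^{|c|} f(z) dz` for every `c`. -/
theorem expectation_loss_shift
    {Ω : Type*} [MeasurableSpace Ω] (μ : Measure Ω) [IsProbabilityMeasure μ]
    (f : ℝ → ℝ) (hf_meas : Measurable f) (hf_nonneg : ∀ x, 0 ≤ f x)
    (hf_total : ∫ z, f z = 1)
    (hf_symm : ∀ x, f (-x) = f x)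
    (hf_mono : ∀ x y : ℝ, 0 ≤ x → x ≤ y → f y ≤ f x)
    (Z : Ω → ℝ) (hZ : Measurable Z)
    (hdens : Measure.map Z μ = volume.withDensity (fun z => ENNReal.ofReal (f z)))
    (hmom : Integrable (fun z => z ^ 2 * f z))
    (k₁ k₂ : ℝ) (hk₁ : 0 < k₁) (hk₂ : 0 < k₂)
    (L : ℝ → ℝ) (hL : ∀ z, L z = if 0 ≤ z then k₁ * z else -k₂ * z) :
    ∀ c : ℝ, (∫ ω, L (Z ω + c) ∂μ)
      = (k₁ + k₂) * (∫ z in Set.Ioi |c|, z * f z) + c * (k₁ - k₂) / 2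
        + |c| * (k₁ + k₂) * (∫ z in (0:ℝ)..|c|, f z) := by
  intro c
  have hint_f : Integrable f := by
    by_contra h
    rw [integral_undef h] at hf_total
    norm_num at hf_total
  have hint_zf : Integrable (fun z => z * f z) := by
    apply Integrable.mono (hint_f.add hmom) ((measurable_id.mul hf_meas).aestronglyMeasurable)
    filter_upwards with z
    have hfz := hf_nonneg z
    simp only [id_eq, Pi.add_apply, Pi.mul_apply]
    rw [Real.norm_eq_abs, Real.norm_eq_abs, abs_mul, abs_of_nonneg hfz]
    have h2 : 0 ≤ f z + z ^ 2 * f z := by positivity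
    rw [abs_of_nonneg h2]
    nlinarith [abs_nonneg z, sq_abs z, sq_nonneg (|z| - 1)]
  have hLeq : L = fun z => if 0 ≤ z then k₁ * z else -k₂ * z := funext hL
  have hLmeas : Measurable L := by
    rw [hLeq]
    exact Measurable.ite (measurableSet_le measurable_const measurable_id)
      (measurable_const.mul measurable_id) ((measurable_const).mul measurable_id)
  -- reduce to density integral
  have step1 : (∫ ω, L (Z ω + c) ∂μ) = ∫ z, L (z + c) * f z := by
    have hmg : AEStronglyMeasurable (fun z => L (z + c)) (Measure.map Z μ) :=
      ((hLmeas.comp (measurable_add_const c)).aestronglyMeasurable)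
    rw [← integral_map hZ.aemeasurable hmg, hdens]
    have hde : (fun z => ENNReal.ofReal (f z)) = fun z => ((f z).toNNReal : ENNReal) := rfl
    rw [hde, integral_withDensity_eq_integral_smul hf_meas.real_toNNReal]
    congr 1
    funext z
    rw [NNReal.smul_def, Real.coe_toNNReal _ (hf_nonneg z), smul_eq_mul]
    ring
  rw [step1]
  rcases le_or_gt 0 c with hc | hc
  · have habs : |c| = c := abs_of_nonneg hc
    have : ∫ z, L (z + c) * f z
        = ∫ z, (if 0 ≤ z + c then k₁ * (z + c) else -k₂ * (z + c)) * f z := by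
      congr 1; funext z; rw [hL]
    rw [this, els_key f hf_meas hf_nonneg hf_total hf_symm hint_zf k₁ k₂ c hc, habs]
  · have habs : |c| = -c := abs_of_neg hc
    have ha : (0:ℝ) ≤ -c := by linarith
    have step2 : ∫ z, L (z + c) * f z
        = ∫ z, (if 0 ≤ z + -c then k₂ * (z + -c) else -k₁ * (z + -c)) * f z := by
      rw [← integral_neg_eq_self (fun z => L (z + c) * f z) volume]
      congr 1
      funext z
      rw [hf_symm, hL]
      have h1 : -z + c = -(z + -c) := by ring
      rw [h1]
      rcases lt_trichotomy (z + -c) 0 with h | h | h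
      · rw [if_pos (by linarith), if_neg (by linarith)]
        ring
      · rw [h]
        norm_num
      · rw [if_neg (by linarith), if_pos (by linarith)]
        ring
    rw [step2, els_key f hf_meas hf_nonneg hf_total hf_symm hint_zf k₂ k₁ (-c) ha, habs]
    ring
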